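/- For all real x with 0 ≤ x < 1 and every positive integer μ, the Taylor polynomial T_μ(x) = Σ_{ℓ=0}^{μ-1} binom(2ℓ,ℓ) (x/2)^{2ℓ} satisfies 0 ≤ 1 - sqrt(1 - x²) T_μ(x) ≤ x^{2μ}. -/

import Mathlib

open Finset

/-- `cc k = C(2k,k)/4^k`, the coefficients of the series `(1-y)^{-1/2}`. -/
noncomputable def cc (k : ℕ) : ℝ := (Nat.centralBinom k : ℝ) / 4 ^ k

lemma cc_nonneg (k : ℕ) : 0 ≤ cc k := by unfold cc; positivity

lemma cc_zero : cc 0 = 1 := by simp [cc, Nat.centralBinom]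

lemma cc_rec (k : ℕ) : (2 * (k : ℝ) + 2) * cc (k + 1) = (2 * k + 1) * cc k := by
  have h := Nat.succ_mul_centralBinom_succ k
  have h' : ((k : ℝ) + 1) * (Nat.centralBinom (k + 1) : ℝ)
      = 2 * (2 * k + 1) * (Nat.centralBinom k : ℝ) := by exact_mod_cast h
  have h4 : (4 : ℝ) ^ (k + 1) ≠ 0 := by positivity
  have h4' : (4 : ℝ) ^ k ≠ 0 := by positivity
  unfold cc
  field_simp
  linear_combination (2 * (4:ℝ) ^ k) * h'

lemma cc_antitone (k : ℕ) : cc (k + 1) ≤ cc k := by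
  have h := cc_rec k
  have h1 : (0:ℝ) < 2 * k + 2 := by positivity
  nlinarith [cc_nonneg (k + 1)]

lemma cc_le_one (k : ℕ) : cc k ≤ 1 := by
  induction k with
  | zero => rw [cc_zero]
  | succ n ih => exact le_trans (cc_antitone n) ih

/-- The convolution identity `∑_{i≤n} c_i c_{n-i} = 1`. -/
lemma cc_conv (n : ℕ) : ∑ i ∈ range (n + 1), cc i * cc (n - i) = 1 := by
  induction n with
  | zero => simp [cc_zero]
  | succ n ih =>
    have hne : ((n : ℝ) + 1) ≠ 0 := by positivity
    apply mul_left_cancel₀ hne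
    rw [mul_one]
    have refl1 : ∑ i ∈ range (n + 2), ((n + 1 - i : ℕ) : ℝ) * (cc i * cc (n + 1 - i))
        = ∑ i ∈ range (n + 2), (i : ℝ) * (cc i * cc (n + 1 - i)) := by
      rw [← sum_range_reflect (fun j => (j : ℝ) * (cc j * cc (n + 1 - j))) (n + 2)]
      apply sum_congr rfl
      intro i hi
      have hi' : i < n + 2 := mem_range.mp hi
      have h1 : n + 2 - 1 - i = n + 1 - i := by omega
      have h2 : n + 1 - (n + 1 - i) = i := by omega
      simp only [h1, h2]
      ring
    have split : ((n : ℝ) + 1) * ∑ i ∈ range (n + 2), cc i * cc (n + 1 - i)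
        = 2 * ∑ i ∈ range (n + 2), (i : ℝ) * (cc i * cc (n + 1 - i)) := by
      rw [mul_sum]
      rw [two_mul, ← refl1]
      nth_rewrite 2 [refl1]
      rw [← sum_add_distrib]
      apply sum_congr rfl
      intro i hi
      have hi' : i < n + 2 := mem_range.mp hi
      have hc : ((n + 1 - i : ℕ) : ℝ) = (n : ℝ) + 1 - i := by
        have : i ≤ n + 1 := by omega
        push_cast [Nat.cast_sub this]
        ring
      rw [hc]; ring
    have shift : ∑ i ∈ range (n + 2), (i : ℝ) * (cc i * cc (n + 1 - i))
        = ∑ k ∈ range (n + 1), ((k : ℝ) + 1) * (cc (k + 1) * cc (n - k)) := by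
      rw [sum_range_succ' (fun i => (i : ℝ) * (cc i * cc (n + 1 - i))) (n + 1)]
      simp only [Nat.cast_zero, zero_mul, add_zero]
      apply sum_congr rfl
      intro k hk
      have : n + 1 - (k + 1) = n - k := by omega
      rw [this]
      push_cast
      ring
    have step : 2 * ∑ k ∈ range (n + 1), ((k : ℝ) + 1) * (cc (k + 1) * cc (n - k))
        = ∑ k ∈ range (n + 1), (2 * (k : ℝ) + 1) * (cc k * cc (n - k)) := by
      rw [mul_sum]
      apply sum_congr rfl
      intro k hk
      have h := cc_rec k
      linear_combination cc (n - k) * h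
    have refl2 : ∑ k ∈ range (n + 1), ((n - k : ℕ) : ℝ) * (cc k * cc (n - k))
        = ∑ k ∈ range (n + 1), (k : ℝ) * (cc k * cc (n - k)) := by
      rw [← sum_range_reflect (fun j => (j : ℝ) * (cc j * cc (n - j))) (n + 1)]
      apply sum_congr rfl
      intro k hk
      have hk' : k < n + 1 := mem_range.mp hk
      have h1 : n + 1 - 1 - k = n - k := by omega
      have h2 : n - (n - k) = k := by omega
      simp only [h1, h2]
      ring
    have final : ∑ k ∈ range (n + 1), (2 * (k : ℝ) + 1) * (cc k * cc (n - k))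
        = (n : ℝ) + 1 := by
      have e1 : ∑ k ∈ range (n + 1), (2 * (k : ℝ) + 1) * (cc k * cc (n - k))
          = ∑ k ∈ range (n + 1), (k : ℝ) * (cc k * cc (n - k))
            + ∑ k ∈ range (n + 1), ((n - k : ℕ) : ℝ) * (cc k * cc (n - k))
            + ∑ k ∈ range (n + 1), cc k * cc (n - k) := by
        rw [refl2, ← sum_add_distrib, ← sum_add_distrib]
        apply sum_congr rfl
        intro k hk
        ring
      rw [e1, refl2, ih]
      have e2 : ∑ k ∈ range (n + 1), (k : ℝ) * (cc k * cc (n - k))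
          + ∑ k ∈ range (n + 1), ((n - k : ℕ) : ℝ) * (cc k * cc (n - k))
          = (n : ℝ) * 1 := by
        rw [refl2]
        nth_rewrite 2 [← refl2]
        rw [← sum_add_distrib, ← ih, mul_sum]
        apply sum_congr rfl
        intro k hk
        have hk' : k ≤ n := by have := mem_range.mp hk; omega
        have hc : ((n - k : ℕ) : ℝ) = (n : ℝ) - k := by
          push_cast [Nat.cast_sub hk']; ring
        rw [hc]; ring
      linarith [e2]
    rw [split, shift, step, final]

/-- truncated coefficients -/
noncomputable def cp (μ k : ℕ) : ℝ := if k < μ then cc k else 0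

lemma cp_nonneg (μ k : ℕ) : 0 ≤ cp μ k := by
  unfold cp; split <;> simp [cc_nonneg]

lemma cp_le_cc (μ k : ℕ) : cp μ k ≤ cc k := by
  unfold cp; split
  · exact le_rfl
  · exact cc_nonneg k

/-- Cauchy product expansion of the square of the truncated series. -/
lemma sq_expand (μ : ℕ) (y : ℝ) :
    (∑ ℓ ∈ range μ, cp μ ℓ * y ^ ℓ) ^ 2
      = ∑ n ∈ range (2 * μ), (∑ i ∈ range (n + 1), cp μ i * cp μ (n - i)) * y ^ n := by
  have hrhs : ∑ n ∈ range (2 * μ), (∑ i ∈ range (n + 1), cp μ i * cp μ (n - i)) * y ^ n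
      = ∑ n ∈ range (2 * μ), ∑ p ∈ Finset.HasAntidiagonal.antidiagonal n,
          cp μ p.1 * cp μ p.2 * y ^ (p.1 + p.2) := by
    apply sum_congr rfl
    intro n hn
    rw [Finset.Nat.sum_antidiagonal_eq_sum_range_succ_mk
      (fun p => cp μ p.1 * cp μ p.2 * y ^ (p.1 + p.2)) n]
    rw [sum_mul]
    apply sum_congr rfl
    intro i hi
    have : i + (n - i) = n := by have := mem_range.mp hi; omega
    rw [this]
  rw [hrhs]
  have hdisj : (↑(range (2 * μ)) : Set ℕ).PairwiseDisjoint Finset.HasAntidiagonal.antidiagonal := by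
    intro a _ b _ hab
    apply Finset.disjoint_left.mpr
    intro p hpa hpb
    exact hab ((Finset.HasAntidiagonal.mem_antidiagonal.mp hpa).symm.trans
      (Finset.HasAntidiagonal.mem_antidiagonal.mp hpb))
  rw [← Finset.sum_biUnion hdisj]
  rw [sq, sum_mul_sum, ← Finset.sum_product']
  have hfun : ∑ p ∈ range μ ×ˢ range μ, cp μ p.1 * y ^ p.1 * (cp μ p.2 * y ^ p.2)
      = ∑ p ∈ range μ ×ˢ range μ, cp μ p.1 * cp μ p.2 * y ^ (p.1 + p.2) := by
    apply sum_congr rfl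
    intro p _
    rw [pow_add]
    ring
  rw [hfun]
  apply Finset.sum_subset
  · intro p hp
    rw [Finset.mem_product] at hp
    have h1 := mem_range.mp hp.1
    have h2 := mem_range.mp hp.2
    rw [Finset.mem_biUnion]
    exact ⟨p.1 + p.2, mem_range.mpr (by omega), Finset.HasAntidiagonal.mem_antidiagonal.mpr rfl⟩
  · intro p _ hp
    rw [Finset.mem_product] at hp
    push_neg at hp
    by_cases h1 : p.1 ∈ range μ
    · have h2 : ¬ p.2 < μ := fun h => (hp h1) (mem_range.mpr h)
      have : cp μ p.2 = 0 := if_neg h2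
      rw [this]; ring
    · have h1' : ¬ p.1 < μ := fun h => h1 (mem_range.mpr h)
      have : cp μ p.1 = 0 := if_neg h1'
      rw [this]; ring

theorem stmt_8 (x : ℝ) (hx0 : 0 ≤ x) (hx1 : x < 1) (μ : ℕ) (hμ : 1 ≤ μ) :
    0 ≤ 1 - Real.sqrt (1 - x ^ 2) *
        ∑ ℓ ∈ Finset.range μ, (Nat.choose (2 * ℓ) ℓ : ℝ) * (x / 2) ^ (2 * ℓ) ∧
      1 - Real.sqrt (1 - x ^ 2) *
          ∑ ℓ ∈ Finset.range μ, (Nat.choose (2 * ℓ) ℓ : ℝ) * (x / 2) ^ (2 * ℓ) ≤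
        x ^ (2 * μ) := by
  set y : ℝ := x ^ 2 with hy
  have hy0 : 0 ≤ y := sq_nonneg x
  have hy1 : y < 1 := by nlinarith
  have hsum : ∑ ℓ ∈ Finset.range μ, (Nat.choose (2 * ℓ) ℓ : ℝ) * (x / 2) ^ (2 * ℓ)
      = ∑ ℓ ∈ range μ, cp μ ℓ * y ^ ℓ := by
    apply sum_congr rfl
    intro ℓ hℓ
    have hℓ' : ℓ < μ := mem_range.mp hℓ
    have : cp μ ℓ = cc ℓ := if_pos hℓ'
    rw [this]
    have e : ((x / 2) : ℝ) ^ (2 * ℓ) = (x ^ 2) ^ ℓ / 4 ^ ℓ := by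
      rw [pow_mul, div_pow, div_pow]
      norm_num
    rw [e]
    unfold cc
    rw [Nat.centralBinom_eq_two_mul_choose, hy]
    ring
  rw [hsum]
  set T : ℝ := ∑ ℓ ∈ range μ, cp μ ℓ * y ^ ℓ with hT
  have hT0 : 0 ≤ T := sum_nonneg fun i _ => mul_nonneg (cp_nonneg μ i) (pow_nonneg hy0 i)
  have hsq := sq_expand μ y
  -- upper bound on T^2
  have hA : T ^ 2 ≤ ∑ n ∈ range (2 * μ), y ^ n := by
    rw [hsq]
    apply sum_le_sum
    intro n _
    have hb : ∑ i ∈ range (n + 1), cp μ i * cp μ (n - i) ≤ 1 := by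
      calc ∑ i ∈ range (n + 1), cp μ i * cp μ (n - i)
          ≤ ∑ i ∈ range (n + 1), cc i * cc (n - i) :=
            sum_le_sum fun i _ => mul_le_mul (cp_le_cc μ i) (cp_le_cc μ (n - i))
              (cp_nonneg μ (n - i)) (cc_nonneg i)
        _ = 1 := cc_conv n
    calc (∑ i ∈ range (n + 1), cp μ i * cp μ (n - i)) * y ^ n
        ≤ 1 * y ^ n := mul_le_mul_of_nonneg_right hb (pow_nonneg hy0 n)
      _ = y ^ n := one_mul _
  -- lower bound on T^2
  have hB : ∑ n ∈ range μ, y ^ n ≤ T ^ 2 := by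
    rw [hsq]
    have heq : ∑ n ∈ range μ, y ^ n
        = ∑ n ∈ range μ, (∑ i ∈ range (n + 1), cp μ i * cp μ (n - i)) * y ^ n := by
      apply sum_congr rfl
      intro n hn
      have hn' : n < μ := mem_range.mp hn
      have hb : ∑ i ∈ range (n + 1), cp μ i * cp μ (n - i) = 1 := by
        rw [← cc_conv n]
        apply sum_congr rfl
        intro i hi
        have hi' : i < n + 1 := mem_range.mp hi
        have e1 : cp μ i = cc i := if_pos (by omega)
        have e2 : cp μ (n - i) = cc (n - i) := if_pos (by omega)
        rw [e1, e2]
      rw [hb, one_mul]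
    rw [heq]
    apply sum_le_sum_of_subset_of_nonneg
    · exact range_subset_range.mpr (by omega)
    · intro n _ _
      exact mul_nonneg (sum_nonneg fun i _ => mul_nonneg (cp_nonneg μ i) (cp_nonneg μ (n - i)))
        (pow_nonneg hy0 n)
  have hyμ0 : 0 ≤ y ^ μ := pow_nonneg hy0 μ
  have hyμ1 : y ^ μ ≤ 1 := pow_le_one₀ hy0 hy1.le
  have hg1 : (1 - y) * ∑ n ∈ range (2 * μ), y ^ n = 1 - y ^ (2 * μ) := by
    linear_combination (-1 : ℝ) * geom_sum_mul y (2 * μ)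
  have hg2 : (1 - y) * ∑ n ∈ range μ, y ^ n = 1 - y ^ μ := by
    linear_combination (-1 : ℝ) * geom_sum_mul y μ
  have h1y : (0:ℝ) ≤ 1 - y := by linarith
  have hAA : (1 - y) * T ^ 2 ≤ 1 := by
    have := mul_le_mul_of_nonneg_left hA h1y
    rw [hg1] at this
    nlinarith [pow_nonneg hy0 (2 * μ)]
  have hBB : 1 - y ^ μ ≤ (1 - y) * T ^ 2 := by
    have := mul_le_mul_of_nonneg_left hB h1y
    rw [hg2] at this
    linarith
  set s : ℝ := Real.sqrt (1 - x ^ 2) with hs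
  have hs0 : 0 ≤ s := Real.sqrt_nonneg _
  have hx2 : (0:ℝ) ≤ 1 - x ^ 2 := by nlinarith
  have hs2 : s ^ 2 = 1 - y := by rw [hs, Real.sq_sqrt hx2, hy]
  have hst : (s * T) ^ 2 = (1 - y) * T ^ 2 := by rw [mul_pow, hs2]
  have hst0 : 0 ≤ s * T := mul_nonneg hs0 hT0
  have hxy : x ^ (2 * μ) = y ^ μ := by rw [pow_mul, hy]
  constructor
  · nlinarith [sq_nonneg (s * T - 1)]
  · rw [hxy]
    nlinarith [sq_nonneg (s * T - (1 - y ^ μ)), sq_nonneg (s * T + (1 - y ^ μ))]
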